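/- Let S : ℝ → ℂ be a continuous 2π-periodic function with |S| ≤ M whose Fourier coefficients at frequencies ±1 vanish (∫₀^{2π} S(s)e^{±is} ds = 0). Then the solution w of w'' + w = S with w(0) = 0, w'(0) = 0 satisfies: w and w' are uniformly bounded on [0,∞). Moreover ‖w‖_∞ ≤ C‖S‖_∞ for a universal constant C (coming from C₀ = (Σ_{n≠±1} (n²−1)^{−2})^{1/2} and the analogous constant for the derivative). -/

import Mathlib

open Real

lemma antideriv_bound (M : ℝ) (g : ℝ → ℂ) (hg : Continuous g)
    (hper : Function.Periodic g (2 * π)) (hbd : ∀ t, ‖g t‖ ≤ M)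
    (hzero : (∫ t in (0:ℝ)..(2 * π), g t) = 0) :
    ∀ s : ℝ, ‖∫ t in (0:ℝ)..s, g t‖ ≤ 2 * π * M := by
  have hπ : (0:ℝ) < 2 * π := by positivity
  set G : ℝ → ℂ := fun s => ∫ t in (0:ℝ)..s, g t with hG
  have hGper : Function.Periodic G (2 * π) := by
    intro s
    have hint : ∀ a b : ℝ, IntervalIntegrable g MeasureTheory.volume a b :=
      fun a b => hg.intervalIntegrable a b
    have h1 : (∫ t in (0:ℝ)..s, g t) + ∫ t in s..(s + 2 * π), g t
        = ∫ t in (0:ℝ)..(s + 2 * π), g t :=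
      intervalIntegral.integral_add_adjacent_intervals (hint 0 s) (hint s _)
    have h2 : (∫ t in s..(s + 2 * π), g t) = ∫ t in (0:ℝ)..(0 + 2 * π), g t :=
      hper.intervalIntegral_add_eq s 0
    simp only [zero_add] at h2
    rw [h2, hzero, add_zero] at h1
    exact h1.symm
  intro s
  obtain ⟨y, hy, hGy⟩ := hGper.exists_mem_Ico₀ hπ s
  show ‖G s‖ ≤ 2 * π * M
  rw [hGy]
  have hM0 : (0:ℝ) ≤ M := le_trans (norm_nonneg _) (hbd 0)
  have h := intervalIntegral.norm_integral_le_of_norm_le_const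
    (a := 0) (b := y) (C := M) (f := g) (fun x _ => hbd x)
  have : ‖G y‖ ≤ M * |y - 0| := h
  refine this.trans ?_
  rw [sub_zero, abs_of_nonneg hy.1]
  calc M * y ≤ M * (2 * π) := by nlinarith [hy.2, hy.1]
    _ = 2 * π * M := by ring

lemma exp_mul_hasDerivAt (c : ℂ) (s : ℝ) :
    HasDerivAt (fun t : ℝ => Complex.exp (c * t)) (c * Complex.exp (c * s)) s := by
  have h1 : HasDerivAt (fun t : ℝ => (c * t : ℂ)) c s := by
    simpa using ((hasDerivAt_id s).ofReal_comp.const_mul c)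
  simpa [mul_comm, Function.comp_def] using (Complex.hasDerivAt_exp (c * s)).comp s h1

/-- If S is continuous, 2π-periodic, bounded by M, with vanishing Fourier
coefficients at frequencies ±1, then the solution of w'' + w = S with zero
initial data is uniformly bounded, together with its derivative, by C·M for a
universal constant C. -/
theorem nonresonant_forced_oscillator_bounded :
    ∃ C > (0:ℝ), ∀ (M : ℝ), 0 < M → ∀ (S w w' : ℝ → ℂ),
      Continuous S → Function.Periodic S (2 * π) →
      (∀ s, ‖S s‖ ≤ M) →
      (∫ s in (0:ℝ)..(2 * π), S s * Complex.exp (Complex.I * s)) = 0 →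
      (∫ s in (0:ℝ)..(2 * π), S s * Complex.exp (-(Complex.I * s))) = 0 →
      (∀ s, HasDerivAt w (w' s) s) →
      (∀ s, HasDerivAt w' (S s - w s) s) →
      w 0 = 0 → w' 0 = 0 →
      ∀ s : ℝ, 0 ≤ s → ‖w s‖ ≤ C * M ∧ ‖w' s‖ ≤ C * M := by
  refine ⟨2 * π, by positivity, ?_⟩
  intro M hM S w w' hScont hSper hSbd hc1 hc2 hw hw' hw0 hw'0
  -- the two auxiliary kernels
  set gp : ℝ → ℂ := fun t => Complex.exp (-(Complex.I * t)) * S t with hgp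
  set gm : ℝ → ℂ := fun t => Complex.exp (Complex.I * t) * S t with hgm
  have hexp_cont : ∀ c : ℂ, Continuous fun t : ℝ => Complex.exp (c * t) := fun c =>
    Complex.continuous_exp.comp (continuous_const.mul Complex.continuous_ofReal)
  have hgp_cont : Continuous gp := by
    simpa [hgp, neg_mul, Pi.mul_def] using ((hexp_cont (-Complex.I)).mul hScont)
  have hgm_cont : Continuous gm := (hexp_cont Complex.I).mul hScont
  have hexp_per : ∀ ε : ℂ, ε = 1 ∨ ε = -1 → ∀ t : ℝ,
      Complex.exp (ε * Complex.I * (t + 2 * π)) = Complex.exp (ε * Complex.I * t) := by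
    intro ε hε t
    have : Complex.exp (ε * Complex.I * (2 * π : ℝ)) = 1 := by
      rcases hε with rfl | rfl
      · push_cast
        rw [one_mul, mul_comm Complex.I]
        exact Complex.exp_two_pi_mul_I
      · push_cast
        rw [show (-1 : ℂ) * Complex.I * (2 * ↑π) = -(2 * ↑π * Complex.I) by ring,
          Complex.exp_neg, Complex.exp_two_pi_mul_I, inv_one]
    have key : (ε * Complex.I * ((t:ℂ) + 2 * π)) = ε * Complex.I * (t : ℝ)
        + ε * Complex.I * ((2 * π : ℝ) : ℂ) := by push_cast; ring
    rw [key, Complex.exp_add, this, mul_one]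
  have hgp_per : Function.Periodic gp (2 * π) := by
    intro t
    simp only [hgp]
    rw [hSper t]
    congr 1
    have := hexp_per (-1) (Or.inr rfl) t
    simpa [neg_mul] using this
  have hgm_per : Function.Periodic gm (2 * π) := by
    intro t
    simp only [hgm]
    rw [hSper t]
    congr 1
    simpa using hexp_per 1 (Or.inl rfl) t
  have hgp_bd : ∀ t, ‖gp t‖ ≤ M := by
    intro t
    have : ‖Complex.exp (-(Complex.I * t))‖ = 1 := by
      rw [Complex.norm_exp]
      simp
    rw [hgp]; simp only [norm_mul, this, one_mul]; exact hSbd t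
  have hgm_bd : ∀ t, ‖gm t‖ ≤ M := by
    intro t
    have : ‖Complex.exp (Complex.I * t)‖ = 1 := by
      rw [Complex.norm_exp]; simp
    rw [hgm]; simp only [norm_mul, this, one_mul]; exact hSbd t
  have hgp_zero : (∫ t in (0:ℝ)..(2 * π), gp t) = 0 := by
    rw [← hc2]; congr 1; ext t; rw [hgp]; ring
  have hgm_zero : (∫ t in (0:ℝ)..(2 * π), gm t) = 0 := by
    rw [← hc1]; congr 1; ext t; rw [hgm]; ring
  set Gp : ℝ → ℂ := fun s => ∫ t in (0:ℝ)..s, gp t with hGp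
  set Gm : ℝ → ℂ := fun s => ∫ t in (0:ℝ)..s, gm t with hGm
  have hGp_bd : ∀ s, ‖Gp s‖ ≤ 2 * π * M :=
    antideriv_bound M gp hgp_cont hgp_per hgp_bd hgp_zero
  have hGm_bd : ∀ s, ‖Gm s‖ ≤ 2 * π * M :=
    antideriv_bound M gm hgm_cont hgm_per hgm_bd hgm_zero
  have hGp_deriv : ∀ s, HasDerivAt Gp (gp s) s := fun s =>
    (hgp_cont.integral_hasStrictDerivAt 0 s).hasDerivAt
  have hGm_deriv : ∀ s, HasDerivAt Gm (gm s) s := fun s =>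
    (hgm_cont.integral_hasStrictDerivAt 0 s).hasDerivAt
  -- key identities
  have keyP : ∀ s : ℝ, w' s + Complex.I * w s = Complex.exp (Complex.I * s) * Gp s := by
    have hconst : ∀ x y : ℝ,
        (fun s : ℝ => Complex.exp (-(Complex.I * s)) * (w' s + Complex.I * w s) - Gp s) x
        = (fun s : ℝ => Complex.exp (-(Complex.I * s)) * (w' s + Complex.I * w s) - Gp s) y := by
      have hd : ∀ s : ℝ, HasDerivAt
          (fun s : ℝ => Complex.exp (-(Complex.I * s)) * (w' s + Complex.I * w s) - Gp s) 0 s := by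
        intro s
        have he : HasDerivAt (fun t : ℝ => Complex.exp (-(Complex.I * t)))
            (-Complex.I * Complex.exp (-(Complex.I * s))) s := by
          simpa [neg_mul] using exp_mul_hasDerivAt (-Complex.I) s
        have hin : HasDerivAt (fun t => w' t + Complex.I * w t)
            ((S s - w s) + Complex.I * w' s) s :=
          (hw' s).add ((hw s).const_mul Complex.I)
        have hmul := he.mul hin
        have := hmul.sub (hGp_deriv s)
        convert this using 1
        rfl
        rfl
        change (0:ℂ) = _ - Complex.exp (-(Complex.I * (s:ℂ))) * S s
        ring_nf
        rw [Complex.I_sq]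
        ring
      intro x y
      exact is_const_of_deriv_eq_zero
        (fun s => (hd s).differentiableAt) (fun s => (hd s).deriv) x y
    intro s
    have h0 := hconst s 0
    simp only [hw0, hw'0, hGp] at h0
    simp only [intervalIntegral.integral_same] at h0
    have h0' : Complex.exp (-(Complex.I * s)) * (w' s + Complex.I * w s) - Gp s = 0 := by
      simpa using h0
    have hne : Complex.exp (-(Complex.I * s)) ≠ 0 := Complex.exp_ne_zero _
    have : Complex.exp (-(Complex.I * s)) * (w' s + Complex.I * w s) = Gp s := by
      linear_combination h0'
    calc w' s + Complex.I * w s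
        = Complex.exp (Complex.I * s) * (Complex.exp (-(Complex.I * s))
            * (w' s + Complex.I * w s)) := by
          rw [← mul_assoc, ← Complex.exp_add]; simp
      _ = Complex.exp (Complex.I * s) * Gp s := by rw [this]
  have keyM : ∀ s : ℝ, w' s - Complex.I * w s = Complex.exp (-(Complex.I * s)) * Gm s := by
    have hconst : ∀ x y : ℝ,
        (fun s : ℝ => Complex.exp (Complex.I * s) * (w' s - Complex.I * w s) - Gm s) x
        = (fun s : ℝ => Complex.exp (Complex.I * s) * (w' s - Complex.I * w s) - Gm s) y := by
      have hd : ∀ s : ℝ, HasDerivAt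
          (fun s : ℝ => Complex.exp (Complex.I * s) * (w' s - Complex.I * w s) - Gm s) 0 s := by
        intro s
        have he : HasDerivAt (fun t : ℝ => Complex.exp (Complex.I * t))
            (Complex.I * Complex.exp (Complex.I * s)) s := exp_mul_hasDerivAt Complex.I s
        have hin : HasDerivAt (fun t => w' t - Complex.I * w t)
            ((S s - w s) - Complex.I * w' s) s :=
          (hw' s).sub ((hw s).const_mul Complex.I)
        have hmul := he.mul hin
        have := hmul.sub (hGm_deriv s)
        convert this using 1
        rfl
        rfl
        change (0:ℂ) = _ - Complex.exp (Complex.I * (s:ℂ)) * S s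
        ring_nf
        rw [Complex.I_sq]
        ring
      intro x y
      exact is_const_of_deriv_eq_zero
        (fun s => (hd s).differentiableAt) (fun s => (hd s).deriv) x y
    intro s
    have h0 := hconst s 0
    simp only [hw0, hw'0, hGm] at h0
    simp only [intervalIntegral.integral_same] at h0
    have h0' : Complex.exp (Complex.I * s) * (w' s - Complex.I * w s) - Gm s = 0 := by
      simpa using h0
    have : Complex.exp (Complex.I * s) * (w' s - Complex.I * w s) = Gm s := by
      linear_combination h0'
    calc w' s - Complex.I * w s
        = Complex.exp (-(Complex.I * s)) * (Complex.exp (Complex.I * s)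
            * (w' s - Complex.I * w s)) := by
          rw [← mul_assoc, ← Complex.exp_add]; simp
      _ = Complex.exp (-(Complex.I * s)) * Gm s := by rw [this]
  -- conclude
  intro s _
  have e1 : ‖Complex.exp (Complex.I * s) * Gp s‖ ≤ 2 * π * M := by
    rw [norm_mul]
    have : ‖Complex.exp (Complex.I * s)‖ = 1 := by
      rw [Complex.norm_exp]; simp
    rw [this, one_mul]; exact hGp_bd s
  have e2 : ‖Complex.exp (-(Complex.I * s)) * Gm s‖ ≤ 2 * π * M := by
    rw [norm_mul]
    have : ‖Complex.exp (-(Complex.I * s))‖ = 1 := by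
      rw [Complex.norm_exp]; simp
    rw [this, one_mul]; exact hGm_bd s
  constructor
  · have h2w : (2 : ℂ) * Complex.I * w s
        = Complex.exp (Complex.I * s) * Gp s - Complex.exp (-(Complex.I * s)) * Gm s := by
      rw [← keyP s, ← keyM s]; ring
    have : ‖(2 : ℂ) * Complex.I * w s‖ ≤ 2 * π * M + 2 * π * M := by
      rw [h2w]
      exact le_trans (norm_sub_le _ _) (add_le_add e1 e2)
    have habs2 : ‖(2 : ℂ) * Complex.I * w s‖ = 2 * ‖w s‖ := by
      simp [norm_mul]
    rw [habs2] at this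
    linarith
  · have h2w' : (2 : ℂ) * w' s
        = Complex.exp (Complex.I * s) * Gp s + Complex.exp (-(Complex.I * s)) * Gm s := by
      rw [← keyP s, ← keyM s]; ring
    have : ‖(2 : ℂ) * w' s‖ ≤ 2 * π * M + 2 * π * M := by
      rw [h2w']
      exact le_trans (norm_add_le _ _) (add_le_add e1 e2)
    have habs2 : ‖(2 : ℂ) * w' s‖ = 2 * ‖w' s‖ := by
      simp [norm_mul]
    rw [habs2] at this
    linarith
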